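/- arXiv:1910.06495 — 2 statements merged into one kernel-verified Lean document; each statement's English description precedes it below -/
import Mathlib

section
/- The function f is strictly decreasing on (0, ∞). -/
open Real Set

private lemma haux : StrictAntiOn (fun t : ℝ => (1 - Real.exp (-t)) / t) (Set.Ioi 0) := by
  apply strictAntiOn_of_deriv_neg (convex_Ioi 0)
  · apply ContinuousOn.div
    · exact (continuous_const.sub (Real.continuous_exp.comp continuous_neg)).continuousOn
    · exact continuous_id.continuousOn
    · intro x hx; exact ne_of_gt hx
  · intro x hx
    rw [interior_Ioi] at hx
    have hx0 : x ≠ 0 := ne_of_gt hx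
    have hd : HasDerivAt (fun t : ℝ => (1 - Real.exp (-t)) / t)
        (((0 - Real.exp (-x) * (-1)) * x - (1 - Real.exp (-x)) * 1) / x ^ 2) x := by
      have h1 : HasDerivAt (fun t : ℝ => Real.exp (-t)) (Real.exp (-x) * (-1)) x :=
        (Real.hasDerivAt_exp (-x)).comp x (hasDerivAt_neg x)
      exact ((hasDerivAt_const x (1:ℝ)).sub h1).div (hasDerivAt_id x) hx0
    rw [hd.deriv]
    have hexp : x + 1 < Real.exp x := by
      have := Real.add_one_lt_exp hx0
      linarith
    have hex : 0 < Real.exp (-x) := Real.exp_pos _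
    have hE : Real.exp (-x) * Real.exp x = 1 := by
      rw [← Real.exp_add]; simp
    have key : Real.exp (-x) * x + Real.exp (-x) < 1 := by
      nlinarith
    have hx2 : 0 < x ^ 2 := by positivity
    apply div_neg_of_neg_of_pos _ hx2
    nlinarith

/-- the correlation coefficient function
`f(t) = (β − α)/(α + β) + 2α(1 − e^{−t(α+β)})/(t(α+β)²)` of the two-dimensional exponentially
alternating Brownian motion (started synchronized) is strictly decreasing on `(0, ∞)`. -/
theorem stmt13 (α β : ℝ) (hα : 0 < α) (hβ : 0 < β) :
    StrictAntiOn
      (fun t : ℝ =>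
        (β - α) / (α + β) + 2 * α * (1 - Real.exp (-(t * (α + β)))) / (t * (α + β) ^ 2))
      (Set.Ioi (0 : ℝ)) := by
  set c := α + β with hc_def
  have hc : 0 < c := by positivity
  have key : ∀ t : ℝ, 0 < t →
      (β - α) / c + 2 * α * (1 - Real.exp (-(t * c))) / (t * c ^ 2)
        = (β - α) / c + (2 * α / c) * ((1 - Real.exp (-(t * c))) / (t * c)) := by
    intro t ht
    have : 2 * α * (1 - Real.exp (-(t * c))) / (t * c ^ 2)
        = (2 * α / c) * ((1 - Real.exp (-(t * c))) / (t * c)) := by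
      rw [div_mul_div_comm]
      congr 1 <;> ring
    rw [this]
  intro a ha b hb hab
  simp only [Set.mem_Ioi] at ha hb
  simp only
  rw [key a ha, key b hb]
  apply (add_lt_add_iff_left _).2
  apply mul_lt_mul_of_pos_left _ (by positivity)
  exact haux (by simpa using mul_pos ha hc) (by simpa using mul_pos hb hc)
    (mul_lt_mul_of_pos_right hab hc)
end

section
/- Almost surely, for every k ≥ 1, Σ_{i=1}^{k} (−1)^{Z_{i−1}} (F_λ(χ_i) − F_λ(χ_{i−1})) = B*(θ_k). -/
open MeasureTheory ProbabilityTheory Real Filter Set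

noncomputable section

/-- `B` is a standard Brownian motion on `(Ω, P)`: it is measurable in `ω` for each time,
starts at `0`, has continuous paths, independent increments (over nonnegative times), and
Gaussian increments `B t - B s ~ N(0, t - s)` for `0 ≤ s ≤ t`. -/
def IsStdBM {Ω : Type*} [MeasurableSpace Ω] (P : Measure Ω) (B : ℝ → Ω → ℝ) : Prop :=
  (∀ t, Measurable (B t)) ∧
  (∀ ω, B 0 ω = 0) ∧
  (∀ ω, Continuous fun t => B t ω) ∧
  (∀ (n : ℕ) (t : ℕ → ℝ), (∀ i, 0 ≤ t i) → Monotone t →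
    iIndepFun
      (fun i : Fin n => fun ω => B (t (i.val + 1)) ω - B (t i.val) ω) P) ∧
  (∀ s t : ℝ, 0 ≤ s → s ≤ t →
    P.map (fun ω => B t ω - B s ω) = gaussianReal 0 (t - s).toNNReal)

/-- with `(Z_k)` arbitrary `{0,1}`-valued random variables and
`B*(t) = Σ_k (−1)^{Z_k}(B(θ_{k+1} ∧ t) − B(θ_k ∧ t))`, almost surely, for every `k ≥ 1`,
`Σ_{i=1}^{k} (−1)^{Z_{i−1}} (F_λ(χ_i) − F_λ(χ_{i−1})) = B*(θ_k)`. -/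
theorem stmt18 {Ω : Type} [MeasurableSpace Ω] (P : Measure Ω) [IsProbabilityMeasure P]
    (l : ℝ) (hl : 0 < l)
    (B : ℝ → Ω → ℝ) (hB : IsStdBM P B)
    -- the `G k` are i.i.d. exponential with rate `l/2`, independent of `B`
    (G : ℕ → Ω → ℝ)
    (hGmeas : ∀ k, Measurable (G k))
    (hGdist : ∀ k, P.map (G k) = expMeasure (l / 2))
    (hGindep : iIndepFun G P)
    (hBGindep : Indep (⨆ t : ℝ, MeasurableSpace.comap (B t) inferInstance)
      (⨆ k : ℕ, MeasurableSpace.comap (G k) inferInstance) P)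
    -- `θ k = G 0 + ⋯ + G (k-1)`, and `M k` is the minimum of `B` on `[θ k, θ (k+1)]`
    (θ : ℕ → Ω → ℝ) (hθ : ∀ k ω, θ k ω = ∑ i ∈ Finset.range k, G i ω)
    (M : ℕ → Ω → ℝ)
    (hM : ∀ k ω, M k ω = sInf ((fun s => B s ω) '' Set.Icc (θ k ω) (θ (k + 1) ω)))
    -- the switching epochs `ξ` of the flip-flop: `ξ 0 = 0`,
    -- `ξ (2k+1) − ξ (2k) = λ^{−1/2}(C_k − M_k)`, `ξ (2k+2) − ξ (2k+1) = λ^{−1/2}(C_{k+1} − M_k)`,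
    -- where `C k = B (θ k)`; and `χ k = ξ (2k)`
    (ξ : ℕ → Ω → ℝ)
    (hξ0 : ∀ ω, ξ 0 ω = 0)
    (hξodd : ∀ k ω, ξ (2 * k + 1) ω = ξ (2 * k) ω + (Real.sqrt l)⁻¹ * (B (θ k ω) ω - M k ω))
    (hξeven : ∀ k ω,
      ξ (2 * k + 2) ω = ξ (2 * k + 1) ω + (Real.sqrt l)⁻¹ * (B (θ (k + 1) ω) ω - M k ω))
    (χ : ℕ → Ω → ℝ) (hχ : ∀ k ω, χ k ω = ξ (2 * k) ω)
    -- the flip-flop path `F ω`: starts at `0`, has slope `−√l` on `[ξ (2k), ξ (2k+1)]` and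
    -- slope `+√l` on `[ξ (2k+1), ξ (2k+2)]`
    (F : Ω → ℝ → ℝ)
    (hF0 : ∀ ω, F ω 0 = 0)
    (hFdown : ∀ k ω, ∀ t ∈ Set.Icc (ξ (2 * k) ω) (ξ (2 * k + 1) ω),
      F ω t = F ω (ξ (2 * k) ω) - Real.sqrt l * (t - ξ (2 * k) ω))
    (hFup : ∀ k ω, ∀ t ∈ Set.Icc (ξ (2 * k + 1) ω) (ξ (2 * k + 2) ω),
      F ω t = F ω (ξ (2 * k + 1) ω) + Real.sqrt l * (t - ξ (2 * k + 1) ω))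
    -- `Z` is an arbitrary `{0,1}`-valued sequence of random variables and
    -- `B*(t) = Σ_k (−1)^{Z k} (B(θ (k+1) ∧ t) − B(θ k ∧ t))`
    (Z : ℕ → Ω → ℕ) (hZval : ∀ k ω, Z k ω = 0 ∨ Z k ω = 1)
    (Bstar : ℝ → Ω → ℝ)
    (hBstar : ∀ t ω, Bstar t ω =
      ∑' k : ℕ, (-1 : ℝ) ^ (Z k ω) * (B (min (θ (k + 1) ω) t) ω - B (min (θ k ω) t) ω)) :
    ∀ᵐ ω ∂P, ∀ k : ℕ, 1 ≤ k →
      ∑ i ∈ Finset.range k,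
          (-1 : ℝ) ^ (Z i ω) * (F ω (χ (i + 1) ω) - F ω (χ i ω)) =
        Bstar (θ k ω) ω := by

  have hsq : (0:ℝ) < Real.sqrt l := Real.sqrt_pos.mpr hl
  -- almost surely all G are nonnegative
  have hGnn : ∀ᵐ ω ∂P, ∀ i, 0 ≤ G i ω := by
    rw [ae_all_iff]
    intro i
    rw [ae_iff]
    have hmap : P {ω | ¬ 0 ≤ G i ω} = (P.map (G i)) (Iio 0) := by
      rw [Measure.map_apply (hGmeas i) measurableSet_Iio]
      congr 1
      ext ω
      simp [not_le]
    rw [hmap, hGdist i, expMeasure, gammaMeasure,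
      withDensity_apply _ measurableSet_Iio]
    exact lintegral_gammaPDF_of_nonpos le_rfl
  filter_upwards [hGnn] with ω hω
  intro k _
  have θmono : Monotone (fun j => θ j ω) := by
    intro a b hab
    simp only [hθ]
    exact Finset.sum_le_sum_of_subset_of_nonneg (Finset.range_subset_range.mpr hab)
      (fun i _ _ => hω i)
  -- M bounds
  have hMle1 : ∀ i, M i ω ≤ B (θ i ω) ω := by
    intro i
    rw [hM]
    refine csInf_le ((isCompact_Icc.image_of_continuousOn
      ((hB.2.2.1 ω).continuousOn)).bddBelow) ?_
    exact ⟨θ i ω, ⟨le_rfl, θmono (Nat.le_succ i)⟩, rfl⟩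
  have hMle2 : ∀ i, M i ω ≤ B (θ (i + 1) ω) ω := by
    intro i
    rw [hM]
    refine csInf_le ((isCompact_Icc.image_of_continuousOn
      ((hB.2.2.1 ω).continuousOn)).bddBelow) ?_
    exact ⟨θ (i + 1) ω, ⟨θmono (Nat.le_succ i), le_rfl⟩, rfl⟩
  -- F increment over each [χ i, χ (i+1)] equals B increment
  have Fstep : ∀ i, F ω (χ (i + 1) ω) - F ω (χ i ω)
      = B (θ (i + 1) ω) ω - B (θ i ω) ω := by
    intro i
    have h1 : ξ (2 * i) ω ≤ ξ (2 * i + 1) ω := by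
      rw [hξodd]
      have : 0 ≤ (Real.sqrt l)⁻¹ * (B (θ i ω) ω - M i ω) :=
        mul_nonneg (inv_nonneg.mpr hsq.le) (sub_nonneg.mpr (hMle1 i))
      linarith
    have h2 : ξ (2 * i + 1) ω ≤ ξ (2 * i + 2) ω := by
      rw [hξeven]
      have : 0 ≤ (Real.sqrt l)⁻¹ * (B (θ (i + 1) ω) ω - M i ω) :=
        mul_nonneg (inv_nonneg.mpr hsq.le) (sub_nonneg.mpr (hMle2 i))
      linarith
    have hcancel : ∀ x : ℝ, Real.sqrt l * ((Real.sqrt l)⁻¹ * x) = x := by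
      intro x
      rw [← mul_assoc, mul_inv_cancel₀ hsq.ne', one_mul]
    have e1 : ξ (2 * i + 1) ω - ξ (2 * i) ω
        = (Real.sqrt l)⁻¹ * (B (θ i ω) ω - M i ω) := by
      rw [hξodd]; ring
    have e2 : ξ (2 * i + 2) ω - ξ (2 * i + 1) ω
        = (Real.sqrt l)⁻¹ * (B (θ (i + 1) ω) ω - M i ω) := by
      rw [hξeven]; ring
    have hFa := hFdown i ω (ξ (2 * i + 1) ω) ⟨h1, le_rfl⟩
    rw [e1, hcancel] at hFa
    have hFb := hFup i ω (ξ (2 * i + 2) ω) ⟨h2, le_rfl⟩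
    rw [e2, hcancel] at hFb
    have hχ1 : χ (i + 1) ω = ξ (2 * i + 2) ω := by
      rw [hχ]; ring_nf
    rw [hχ1, hχ, hFb, hFa]
    ring
  rw [hBstar]
  have hzero : ∀ j ∉ Finset.range k,
      (-1 : ℝ) ^ (Z j ω) * (B (min (θ (j + 1) ω) (θ k ω)) ω
        - B (min (θ j ω) (θ k ω)) ω) = 0 := by
    intro j hj
    rw [Finset.mem_range, not_lt] at hj
    rw [min_eq_right (θmono (hj.trans (Nat.le_succ j))),
      min_eq_right (θmono hj), sub_self, mul_zero]
  rw [tsum_eq_sum hzero]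
  refine Finset.sum_congr rfl ?_
  intro i hi
  rw [Finset.mem_range] at hi
  rw [min_eq_left (θmono hi), min_eq_left (θmono hi.le), Fstep i]
end
end
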